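/- Let t ∈ (4/27, 1/3), let θ ∈ (t, 1/3), and suppose λ₁, λ₂ ∈ (0, θ] and (i_n), (j_n) ∈ {-1,0,1}^ℕ satisfy 01(-1)0^∞ ≼ (i_n), (j_n) ≼ 01^∞ (lexicographically), Π((i_n), λ₁) = t = Π((j_n), λ₂), and λ₁ < λ₂. Then (i_n) ≻ (j_n) lexicographically; i.e., the coding map is strictly decreasing there. -/

import Mathlib

open scoped Pointwise

/-- `PiFun i λ = (1-λ) ∑_{n≥0} i_n λ^n`, the series Π from the paper (0-based indexing). -/
noncomputable def PiFun (i : ℕ → ℝ) (l : ℝ) : ℝ := (1 - l) * ∑' n : ℕ, i n * l ^ n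

/-- `i` is a sequence over the alphabet `{-1,0,1}`. -/
def IsCoding (i : ℕ → ℝ) : Prop := ∀ n, i n = -1 ∨ i n = 0 ∨ i n = 1

/-- Strict lexicographic order on sequences. -/
def LexLt (i j : ℕ → ℝ) : Prop := ∃ m, (∀ n, n < m → i n = j n) ∧ i m < j m

/-- Non-strict lexicographic order on sequences. -/
def LexLe (i j : ℕ → ℝ) : Prop := LexLt i j ∨ i = j

-- `rho i j = 3^{-k}` where `k` is the first (0-based) index at which the sequences differ
-- (this equals `3^{1-k}` for 1-based indexing as in the paper).
open Classical in
noncomputable def rho (i j : ℕ → ℝ) : ℝ :=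
  if i = j then 0 else (3 : ℝ) ^ (-((sInf {n : ℕ | i n ≠ j n} : ℕ) : ℤ))

/-- The middle-`(1-2λ)` Cantor set `C_λ`. -/
def Cset (l : ℝ) : Set ℝ :=
  {x | ∃ i : ℕ → ℝ, (∀ n, i n = 0 ∨ i n = 1) ∧ x = (1 - l) * ∑' n : ℕ, i n * l ^ n}

/-- `Λ(t) = {λ ∈ (0,1/3] : t ∈ C_λ - C_λ}`. -/
def Lam (t : ℝ) : Set ℝ := {l | l ∈ Set.Ioc (0 : ℝ) (1/3) ∧ t ∈ Cset l - Cset l}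

section MyAux

variable {i j : ℕ → ℝ} {l : ℝ}

lemma my_summable_coding (hi : IsCoding i) (h0 : 0 < l) (h1 : l < 1) :
    Summable (fun n => i n * l ^ n) := by
  apply Summable.of_norm_bounded (g := fun n => l ^ n) (summable_geometric_of_lt_one h0.le h1)
  intro n
  rw [norm_mul, norm_pow, Real.norm_eq_abs, Real.norm_eq_abs, abs_of_pos h0]
  have hb : |i n| ≤ 1 := by rcases hi n with h|h|h <;> simp [h]
  calc |i n| * l ^ n ≤ 1 * l ^ n :=
        mul_le_mul_of_nonneg_right hb (pow_nonneg h0.le n)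
    _ = l ^ n := one_mul _

lemma my_summable_codingF (hi : IsCoding i) (h0 : 0 < l) (h1 : l < 1) :
    Summable (fun n => i n * ((1 - l) * l ^ n)) := by
  have h := (my_summable_coding hi h0 h1).mul_left (1 - l)
  exact h.congr fun n => by ring

lemma my_summable_tail_geom (h0 : 0 < l) (h1 : l < 1) (k : ℕ) :
    Summable (fun n : ℕ => (1 - l) * l ^ (n + k)) := by
  have h := (summable_geometric_of_lt_one h0.le h1).mul_left ((1 - l) * l ^ k)
  exact h.congr fun n => by rw [pow_add]; ring

lemma my_tsum_tail_geom (h0 : 0 < l) (h1 : l < 1) (k : ℕ) :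
    ∑' n : ℕ, ((1 - l) * l ^ (n + k)) = l ^ k := by
  have hne : (1 : ℝ) - l ≠ 0 := by linarith
  have : ∀ n : ℕ, (1 - l) * l ^ (n + k) = ((1 - l) * l ^ k) * l ^ n := by
    intro n; rw [pow_add]; ring
  rw [tsum_congr this, tsum_mul_left, tsum_geometric_of_lt_one h0.le h1]
  field_simp

lemma my_piFun_eq (h0 : 0 < l) (h1 : l < 1) (i : ℕ → ℝ) :
    (1 - l) * ∑' n : ℕ, i n * l ^ n = ∑' n : ℕ, i n * ((1 - l) * l ^ n) := by
  rw [← tsum_mul_left]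
  exact tsum_congr fun n => by ring


lemma my_lex_trichot (i j : ℕ → ℝ) : LexLt i j ∨ i = j ∨ LexLt j i := by
  by_cases h : i = j
  · exact Or.inr (Or.inl h)
  have hne : ∃ n, i n ≠ j n := by
    by_contra h'; push_neg at h'; exact h (funext h')
  classical
  have hm : i (Nat.find hne) ≠ j (Nat.find hne) := Nat.find_spec hne
  have hpre : ∀ n, n < Nat.find hne → i n = j n := by
    intro n hn
    by_contra h'
    exact Nat.find_min hne hn h'
  rcases lt_or_gt_of_ne hm with h' | h'
  · exact Or.inl ⟨_, hpre, h'⟩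
  · exact Or.inr (Or.inr ⟨_, fun n hn => (hpre n hn).symm, h'⟩)

lemma my_pi_le_of_lexLt {i j : ℕ → ℝ} {l : ℝ} (hi : IsCoding i) (hj : IsCoding j)
    (hij : LexLt i j) (h0 : 0 < l) (h3 : l ≤ 1 / 3) : PiFun i l ≤ PiFun j l := by
  obtain ⟨m, hagree, hm⟩ := hij
  have h1 : l < 1 := by linarith
  have hw : ∀ n : ℕ, (0 : ℝ) ≤ (1 - l) * l ^ n := fun n =>
    mul_nonneg (by linarith) (pow_nonneg h0.le n)
  suffices h : 0 ≤ PiFun j l - PiFun i l by linarith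
  have hsum : Summable (fun n => j n * ((1 - l) * l ^ n) - i n * ((1 - l) * l ^ n)) :=
    (my_summable_codingF hj h0 h1).sub (my_summable_codingF hi h0 h1)
  have hdiff : PiFun j l - PiFun i l
      = ∑' n : ℕ, (j n * ((1 - l) * l ^ n) - i n * ((1 - l) * l ^ n)) := by
    unfold PiFun
    rw [my_piFun_eq h0 h1 j, my_piFun_eq h0 h1 i,
      Summable.tsum_sub (my_summable_codingF hj h0 h1) (my_summable_codingF hi h0 h1)]
  rw [hdiff, ← Summable.sum_add_tsum_nat_add (m + 1) hsum]
  -- finite part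
  have hfin : ∑ n ∈ Finset.range (m + 1), (j n * ((1 - l) * l ^ n) - i n * ((1 - l) * l ^ n))
      = (j m - i m) * ((1 - l) * l ^ m) := by
    rw [Finset.sum_eq_single_of_mem m (Finset.self_mem_range_succ m)]
    · ring
    · intro n hn hne
      have : n < m := by simp at hn; omega
      rw [hagree n this]; ring
  have hjim : 1 ≤ j m - i m := by
    rcases hi m with h | h | h <;> rcases hj m with h' | h' | h' <;>
      rw [h, h'] at hm ⊢ <;> linarith
  have htail : (-2 : ℝ) * l ^ (m + 1)
      ≤ ∑' n : ℕ, (j (n + (m + 1)) * ((1 - l) * l ^ (n + (m + 1)))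
        - i (n + (m + 1)) * ((1 - l) * l ^ (n + (m + 1)))) := by
    have hb : ∀ n : ℕ, (-2 : ℝ) * ((1 - l) * l ^ (n + (m + 1)))
        ≤ j (n + (m + 1)) * ((1 - l) * l ^ (n + (m + 1)))
          - i (n + (m + 1)) * ((1 - l) * l ^ (n + (m + 1))) := by
      intro n
      have hwn := hw (n + (m + 1))
      have hji : (-2 : ℝ) ≤ j (n + (m + 1)) - i (n + (m + 1)) := by
        rcases hi (n + (m + 1)) with h | h | h <;> rcases hj (n + (m + 1)) with h' | h' | h' <;>
          rw [h, h'] <;> norm_num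
      nlinarith
    have hs1 : Summable (fun n : ℕ => (-2 : ℝ) * ((1 - l) * l ^ (n + (m + 1)))) :=
      (my_summable_tail_geom h0 h1 (m + 1)).mul_left _
    have hs2 := (summable_nat_add_iff (m + 1)).2 hsum
    calc (-2 : ℝ) * l ^ (m + 1) = ∑' n : ℕ, (-2 : ℝ) * ((1 - l) * l ^ (n + (m + 1))) := by
          rw [tsum_mul_left, my_tsum_tail_geom h0 h1]
      _ ≤ _ := Summable.tsum_le_tsum hb hs1 hs2
  have hfin' : (1 - l) * l ^ m ≤ (j m - i m) * ((1 - l) * l ^ m) := by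
    nlinarith [hw m]
  have hkey : (0 : ℝ) ≤ (1 - l) * l ^ m + (-2) * l ^ (m + 1) := by
    have : (1 - l) * l ^ m + (-2) * l ^ (m + 1) = l ^ m * (1 - 3 * l) := by
      rw [pow_succ]; ring
    rw [this]
    exact mul_nonneg (pow_nonneg h0.le m) (by linarith)
  rw [hfin]
  linarith


section Mono

variable {i : ℕ → ℝ} {l1 l2 : ℝ}

lemma my_pow_lb {a b : ℝ} (h0 : 0 ≤ a) (hab : a ≤ b) :
    ∀ n : ℕ, ((n : ℝ) + 1) * a ^ n * (b - a) ≤ b ^ (n + 1) - a ^ (n + 1) := by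
  intro n
  induction n with
  | zero => simp
  | succ n ih =>
    have hb0 : 0 ≤ b := le_trans h0 hab
    have key : b ^ (n + 2) - a ^ (n + 2)
        = b * (b ^ (n + 1) - a ^ (n + 1)) + a ^ (n + 1) * (b - a) := by ring
    have h1 : b * (((n : ℝ) + 1) * a ^ n * (b - a)) ≤ b * (b ^ (n + 1) - a ^ (n + 1)) :=
      mul_le_mul_of_nonneg_left ih hb0
    have h2 : ((n : ℝ) + 1) * a ^ (n + 1) * (b - a) ≤ b * (((n : ℝ) + 1) * a ^ n * (b - a)) := by
      have haa : a ^ (n + 1) = a ^ n * a := pow_succ a n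
      have : 0 ≤ ((n : ℝ) + 1) * a ^ n * (b - a) * (b - a) := by
        have := mul_nonneg (mul_nonneg (by positivity : (0:ℝ) ≤ ((n:ℝ)+1) * a ^ n)
          (sub_nonneg.2 hab)) (sub_nonneg.2 hab)
        linarith
      rw [haa]; nlinarith [this]
    have h3 : (0 : ℝ) ≤ a ^ (n + 1) * (b - a) :=
      mul_nonneg (pow_nonneg h0 _) (sub_nonneg.2 hab)
    push_cast
    nlinarith

lemma my_F_nonneg (hl0 : 0 < l1) (h12 : l1 ≤ l2) (hl2 : l2 < 1 / 3) :
    ∀ n : ℕ, 1 ≤ n → (1 - l1) * l1 ^ n ≤ (1 - l2) * l2 ^ n := by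
  intro n hn
  obtain ⟨m, rfl⟩ : ∃ m, n = m + 1 := ⟨n - 1, by omega⟩
  have hp : l1 ^ m ≤ l2 ^ m := pow_le_pow_left₀ hl0.le h12 m
  have ha : (1 - l1) * l1 ≤ (1 - l2) * l2 := by nlinarith
  have hb : (0 : ℝ) ≤ (1 - l2) * l2 := by nlinarith
  calc (1 - l1) * l1 ^ (m + 1) = ((1 - l1) * l1) * l1 ^ m := by rw [pow_succ]; ring
    _ ≤ ((1 - l2) * l2) * l2 ^ m := mul_le_mul ha hp (pow_nonneg hl0.le m) hb
    _ = (1 - l2) * l2 ^ (m + 1) := by rw [pow_succ]; ring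

lemma my_summable_G (hi : IsCoding i) (hl0 : 0 < l1) (h11 : l1 < 1) (hl20 : 0 < l2)
    (h21 : l2 < 1) :
    Summable (fun n => i n * ((1 - l2) * l2 ^ n - (1 - l1) * l1 ^ n)) :=
  ((my_summable_codingF hi hl20 h21).sub (my_summable_codingF hi hl0 h11)).congr fun n => by ring

lemma my_tsum_tail_F (hl0 : 0 < l1) (h11 : l1 < 1) (hl20 : 0 < l2) (h21 : l2 < 1) (k : ℕ) :
    ∑' n : ℕ, ((1 - l2) * l2 ^ (n + k) - (1 - l1) * l1 ^ (n + k)) = l2 ^ k - l1 ^ k := by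
  rw [Summable.tsum_sub (my_summable_tail_geom hl20 h21 k) (my_summable_tail_geom hl0 h11 k),
    my_tsum_tail_geom hl20 h21 k, my_tsum_tail_geom hl0 h11 k]

lemma my_tail_ge (hi : IsCoding i) (hl0 : 0 < l1) (h12 : l1 < l2) (hl2 : l2 < 1 / 3)
    (k : ℕ) (hk : 1 ≤ k) :
    -(l2 ^ k - l1 ^ k)
      ≤ ∑' n : ℕ, i (n + k) * ((1 - l2) * l2 ^ (n + k) - (1 - l1) * l1 ^ (n + k)) := by
  have h11 : l1 < 1 := by linarith
  have hl20 : 0 < l2 := lt_trans hl0 h12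
  have h21 : l2 < 1 := by linarith
  have hF := my_F_nonneg hl0 h12.le hl2
  have hterm : ∀ n : ℕ, -((1 - l2) * l2 ^ (n + k) - (1 - l1) * l1 ^ (n + k))
      ≤ i (n + k) * ((1 - l2) * l2 ^ (n + k) - (1 - l1) * l1 ^ (n + k)) := by
    intro n
    have h := hF (n + k) (by omega)
    rcases hi (n + k) with h' | h' | h' <;> rw [h'] <;> nlinarith
  have hs1 : Summable (fun n : ℕ => -((1 - l2) * l2 ^ (n + k) - (1 - l1) * l1 ^ (n + k))) :=
    ((my_summable_tail_geom hl20 h21 k).sub (my_summable_tail_geom hl0 h11 k)).neg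
  have hs2 : Summable (fun n : ℕ =>
      i (n + k) * ((1 - l2) * l2 ^ (n + k) - (1 - l1) * l1 ^ (n + k))) :=
    (summable_nat_add_iff k).2 (my_summable_G hi hl0 h11 hl20 h21)
  calc -(l2 ^ k - l1 ^ k)
      = ∑' n : ℕ, -((1 - l2) * l2 ^ (n + k) - (1 - l1) * l1 ^ (n + k)) := by
        rw [tsum_neg, my_tsum_tail_F hl0 h11 hl20 h21 k]
    _ ≤ _ := Summable.tsum_le_tsum hterm hs1 hs2

set_option maxHeartbeats 1000000 in
lemma my_mono (hi : IsCoding i) (h00 : i 0 = 0) (h11 : i 1 = 1)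
    (hc : i 2 = 0 ∨ i 2 = 1 ∨ (i 2 = -1 ∧ ((∀ n, 3 ≤ n → i n = 0) ∨
      ∃ m, 3 ≤ m ∧ (∀ n, 3 ≤ n → n < m → i n = 0) ∧ i m = 1)))
    (hl0 : 0 < l1) (h12 : l1 < l2) (hl2 : l2 < 1 / 3) :
    PiFun i l1 < PiFun i l2 := by
  have hl1_1 : l1 < 1 := by linarith
  have hl20 : 0 < l2 := lt_trans hl0 h12
  have hl2_1 : l2 < 1 := by linarith
  have hl13 : l1 < 1 / 3 := lt_trans h12 hl2
  have hsumG := my_summable_G hi hl0 hl1_1 hl20 hl2_1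
  have hdiff : PiFun i l2 - PiFun i l1
      = ∑' n : ℕ, i n * ((1 - l2) * l2 ^ n - (1 - l1) * l1 ^ n) := by
    unfold PiFun
    rw [my_piFun_eq hl20 hl2_1 i, my_piFun_eq hl0 hl1_1 i,
      ← Summable.tsum_sub (my_summable_codingF hi hl20 hl2_1) (my_summable_codingF hi hl0 hl1_1)]
    exact tsum_congr fun n => by ring
  have hF := my_F_nonneg hl0 h12.le hl2
  -- F1 - F2 > 0
  have hF12 : 0 < ((1 - l2) * l2 ^ 1 - (1 - l1) * l1 ^ 1)
      - ((1 - l2) * l2 ^ 2 - (1 - l1) * l1 ^ 2) := by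
    have key : ((1 - l2) * l2 ^ 1 - (1 - l1) * l1 ^ 1) - ((1 - l2) * l2 ^ 2 - (1 - l1) * l1 ^ 2)
        = (l2 - l1) * ((1/3 - l1) + (1/3 - l2) + ((1/3 - l1)^2 + (1/3 - l1) * (1/3 - l2)
          + (1/3 - l2)^2)) := by ring
    rw [key]
    have ha : 0 < 1/3 - l1 := by linarith
    have hb : 0 < 1/3 - l2 := by linarith
    have := mul_pos ha hb
    nlinarith [sq_nonneg (1/3 - l1), sq_nonneg (1/3 - l2), sub_pos.2 h12]
  suffices h : 0 < PiFun i l2 - PiFun i l1 by linarith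
  rw [hdiff]
  rcases hc with hc | hc | ⟨hc2, hc | ⟨m, hm3, hmz, hm1⟩⟩
  -- case i 2 = 0 or 1 : split at 3
  case inl | inr.inl =>
    rw [← Summable.sum_add_tsum_nat_add 3 hsumG]
    have htail := my_tail_ge hi hl0 h12 hl2 3 (by norm_num)
    have hfin : ∑ n ∈ Finset.range 3, i n * ((1 - l2) * l2 ^ n - (1 - l1) * l1 ^ n)
        = ((1 - l2) * l2 ^ 1 - (1 - l1) * l1 ^ 1)
          + i 2 * ((1 - l2) * l2 ^ 2 - (1 - l1) * l1 ^ 2) := by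
      rw [Finset.sum_range_succ, Finset.sum_range_succ, Finset.sum_range_succ,
        Finset.sum_range_zero, h00, h11]
      ring
    rw [hfin]
    have hF2 : 0 ≤ i 2 * ((1 - l2) * l2 ^ 2 - (1 - l1) * l1 ^ 2) := by
      have := hF 2 (by norm_num)
      first
      | (rw [hc]; nlinarith)
      | (rw [hc]; nlinarith)
    have hmain : 0 < ((1 - l2) * l2 ^ 1 - (1 - l1) * l1 ^ 1) - (l2 ^ 3 - l1 ^ 3) := by
      nlinarith [mul_pos (sub_pos.2 h12) (mul_pos hl0 hl20), sq_nonneg (l1 - l2),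
        mul_pos hl0 hl20, sub_pos.2 h12, mul_pos (mul_pos hl0 hl0) hl0,
        mul_pos (mul_pos hl20 hl20) hl20]
    linarith
  -- case i 2 = -1, tail zero
  case inr.inr.inl =>
    have hall : ∀ n : ℕ, i (n + 3) * ((1 - l2) * l2 ^ (n + 3) - (1 - l1) * l1 ^ (n + 3)) = 0 := by
      intro n; rw [hc (n + 3) (by omega)]; ring
    rw [← Summable.sum_add_tsum_nat_add 3 hsumG, tsum_congr hall, tsum_zero]
    rw [Finset.sum_range_succ, Finset.sum_range_succ, Finset.sum_range_succ,
      Finset.sum_range_zero, h00, h11, hc2]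
    nlinarith [hF12]
  -- case i 2 = -1, first 1 at position m ≥ 3
  case inr.inr.inr =>
    obtain ⟨p, rfl⟩ : ∃ p, m = p + 3 := ⟨m - 3, by omega⟩
    rw [← Summable.sum_add_tsum_nat_add (p + 3 + 1) hsumG]
    have htail := my_tail_ge hi hl0 h12 hl2 (p + 3 + 1) (by omega)
    have hfin : ∑ n ∈ Finset.range (p + 3 + 1), i n * ((1 - l2) * l2 ^ n - (1 - l1) * l1 ^ n)
        = (((1 - l2) * l2 ^ 1 - (1 - l1) * l1 ^ 1) - ((1 - l2) * l2 ^ 2 - (1 - l1) * l1 ^ 2))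
          + ((1 - l2) * l2 ^ (p + 3) - (1 - l1) * l1 ^ (p + 3)) := by
      rw [Finset.sum_range_succ]
      have e1 : ∑ n ∈ Finset.range 3, i n * ((1 - l2) * l2 ^ n - (1 - l1) * l1 ^ n)
          = ∑ n ∈ Finset.range (p + 3), i n * ((1 - l2) * l2 ^ n - (1 - l1) * l1 ^ n) := by
        apply Finset.sum_subset (Finset.range_subset_range.2 (by omega))
        intro x hx hx'
        have hx3 : 3 ≤ x := by simpa using hx'
        have hxp : x < p + 3 := Finset.mem_range.mp hx
        rw [hmz x hx3 hxp]; ring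
      rw [← e1, Finset.sum_range_succ, Finset.sum_range_succ, Finset.sum_range_succ,
        Finset.sum_range_zero, h00, h11, hc2, hm1]
      ring
    rw [hfin]
    have hbern := my_pow_lb hl0.le h12.le (p + 2)
    have hc0 : (0:ℝ) ≤ l1 ^ (p + 2) * (l2 - l1) :=
      mul_nonneg (pow_nonneg hl0.le _) (by linarith)
    have hc3 : 3 * (l1 ^ (p + 2) * (l2 - l1)) ≤ l2 ^ (p + 3) - l1 ^ (p + 3) := by
      have hpe : p + 2 + 1 = p + 3 := by omega
      rw [hpe] at hbern
      push_cast at hbern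
      have h3n : (3:ℝ) ≤ ((p:ℝ) + 2) + 1 := by
        have := Nat.cast_nonneg (α := ℝ) p; linarith
      nlinarith [hbern, hc0]
    have hE : 0 ≤ ((1 - l2) * l2 ^ (p + 3) - (1 - l1) * l1 ^ (p + 3))
        - (l2 ^ (p + 3 + 1) - l1 ^ (p + 3 + 1)) := by
      have e2 : l2 ^ (p + 3 + 1) = l2 ^ (p + 3) * l2 := pow_succ _ _
      have e3 : l1 ^ (p + 3 + 1) = l1 ^ (p + 3) * l1 := pow_succ _ _
      have e4 : l1 ^ (p + 3) = l1 ^ (p + 2) * l1 := pow_succ _ _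
      rw [e2, e3, e4]
      rw [e4] at hc3
      have hprod1 : (0:ℝ) ≤ (1 - 2 * l2)
          * (l2 ^ (p + 3) - l1 ^ (p + 2) * l1 - 3 * (l1 ^ (p + 2) * (l2 - l1))) :=
        mul_nonneg (by linarith) (by linarith)
      have hprod2 : (0:ℝ) ≤ (l1 ^ (p + 2) * (l2 - l1)) * (3 - 6 * l2 - 2 * l1) :=
        mul_nonneg hc0 (by linarith)
      nlinarith [hprod1, hprod2]
    linarith

end Mono


lemma my_struct {i : ℕ → ℝ} (hi : IsCoding i)
    (hia : LexLe (fun n => if n = 0 then (0 : ℝ) else if n = 1 then 1 else if n = 2 then -1 else 0) i)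
    (hib : LexLe i (fun n => if n = 0 then (0 : ℝ) else 1)) :
    i 0 = 0 ∧ i 1 = 1 ∧ (i 2 = 0 ∨ i 2 = 1 ∨ (i 2 = -1 ∧ ((∀ n, 3 ≤ n → i n = 0) ∨
      ∃ m, 3 ≤ m ∧ (∀ n, 3 ≤ n → n < m → i n = 0) ∧ i m = 1))) := by
  have h0le : i 0 ≤ 0 := by
    rcases hib with ⟨m, hpre, hm⟩ | heq
    · rcases Nat.eq_zero_or_pos m with rfl | hm0
      · simpa using hm.le
      · have := hpre 0 hm0; simp at this; simp [this]
    · have := congrFun heq 0; simp at this; simp [this]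
  have h0ge : 0 ≤ i 0 := by
    rcases hia with ⟨m, hpre, hm⟩ | heq
    · rcases Nat.eq_zero_or_pos m with rfl | hm0
      · simpa using hm.le
      · have := hpre 0 hm0; simp at this; simp [← this]
    · have := congrFun heq 0; simp at this; simp [← this]
  have h0 : i 0 = 0 := le_antisymm h0le h0ge
  have h1 : i 1 = 1 := by
    rcases hia with ⟨m, hpre, hm⟩ | heq
    · match m, hm with
      | 0, hm => simp [h0] at hm
      | 1, hm =>
        simp at hm
        rcases hi 1 with h | h | h <;> rw [h] at hm <;> linarith
      | Nat.succ (Nat.succ m), hm =>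
        have := hpre 1 (by omega); simpa using this.symm
    · have := congrFun heq 1; simpa using this.symm
  refine ⟨h0, h1, ?_⟩
  rcases hi 2 with h2 | h2 | h2
  · right; right
    refine ⟨h2, ?_⟩
    rcases hia with ⟨m, hpre, hm⟩ | heq
    · have hm3 : 3 ≤ m := by
        match m, hm with
        | 0, hm => simp [h0] at hm
        | 1, hm => simp [h1] at hm
        | 2, hm => simp [h2] at hm
        | Nat.succ (Nat.succ (Nat.succ m)), hm => omega
      right
      refine ⟨m, hm3, ?_, ?_⟩
      · intro n hn3 hnm
        have := hpre n hnm
        have hn0 : n ≠ 0 := by omega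
        have hn1 : n ≠ 1 := by omega
        have hn2 : n ≠ 2 := by omega
        simp [hn0, hn1, hn2] at this
        exact this.symm
      · have hm0 : m ≠ 0 := by omega
        have hm1 : m ≠ 1 := by omega
        have hm2 : m ≠ 2 := by omega
        simp [hm0, hm1, hm2] at hm
        rcases hi m with h | h | h <;> rw [h] at hm ⊢ <;> first | rfl | linarith
    · left
      intro n hn
      have := congrFun heq n
      have hn0 : n ≠ 0 := by omega
      have hn1 : n ≠ 1 := by omega
      have hn2 : n ≠ 2 := by omega
      simp [hn0, hn1, hn2] at this
      exact this.symm
  · left; exact h2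
  · right; left; exact h2

end MyAux

theorem stmt18 (t θ : ℝ) (ht : t ∈ Set.Ioo (4/27 : ℝ) (1/3)) (hθ : θ ∈ Set.Ioo t (1/3))
    (l₁ l₂ : ℝ) (h1 : l₁ ∈ Set.Ioc (0 : ℝ) θ) (h2 : l₂ ∈ Set.Ioc (0 : ℝ) θ)
    (i j : ℕ → ℝ) (hi : IsCoding i) (hj : IsCoding j)
    (hia : LexLe (fun n => if n = 0 then (0 : ℝ) else if n = 1 then 1 else if n = 2 then -1 else 0) i)
    (hib : LexLe i (fun n => if n = 0 then (0 : ℝ) else 1))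
    (hja : LexLe (fun n => if n = 0 then (0 : ℝ) else if n = 1 then 1 else if n = 2 then -1 else 0) j)
    (hjb : LexLe j (fun n => if n = 0 then (0 : ℝ) else 1))
    (hit : PiFun i l₁ = t) (hjt : PiFun j l₂ = t) (hlt : l₁ < l₂) :
    LexLt j i := by
  obtain ⟨hi0, hi1, hic⟩ := my_struct hi hia hib
  have hl20 : 0 < l₂ := h2.1
  have hl23 : l₂ < 1/3 := lt_of_le_of_lt h2.2 hθ.2
  have hmono := my_mono hi hi0 hi1 hic h1.1 hlt hl23
  rcases my_lex_trichot i j with h | rfl | h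
  · have hle := my_pi_le_of_lexLt hi hj h hl20 hl23.le
    linarith
  · linarith
  · exact h
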